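/- Let G = (A, W, Ω) be a McNaughton game and let X ⊆ V be such that A(X) is a subarena and X ∩ W ∈ Ω. Then Player 0 fully wins G(X) if and only if for every Y ⊊ X such that A(Y) is a subarena that is a 0-trap in G(X), Player 0 fully wins G(Y). -/

import Mathlib

open Set

/-- An arena: a finite directed bipartite graph where every vertex has an
outgoing edge.  The vertex set is `V0 ∪ V1` inside the finite type `α`. -/
structure Arena (α : Type) [Fintype α] where
  V0 : Set α
  V1 : Set α
  E : Set (α × α)
  disj : Disjoint V0 V1
  bipartite : E ⊆ (V0 ×ˢ V1) ∪ (V1 ×ˢ V0)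
  succ : ∀ v ∈ V0 ∪ V1, ∃ u, (v, u) ∈ E

variable {α : Type} [Fintype α]

/-- The set of positions of the arena. -/
def Arena.V (A : Arena α) : Set α := A.V0 ∪ A.V1

/-- The positions of Player σ (σ ∈ {0,1}). -/
def Arena.P (A : Arena α) (σ : Fin 2) : Set α := if σ = 0 then A.V0 else A.V1

/-- `A(X)` is a subarena: `X ⊆ V` and every vertex of `X` has an
outgoing edge inside `X`. -/
def Subarena (A : Arena α) (X : Set α) : Prop :=
  X ⊆ A.V ∧ ∀ v ∈ X, ∃ u ∈ X, (v, u) ∈ A.E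

/-- `A(Y)` is a σ-trap of the pseudo-arena `A(X)`: every vertex of
`Y ∩ V_{1-σ}` has an `E`-successor in `Y`, and every vertex of `Y ∩ V_σ`
has all of its `E`-successors inside `X` lying in `Y`.
A σ-trap of `A` itself is `TrapIn A A.V σ Y`. -/
def TrapIn (A : Arena α) (X : Set α) (σ : Fin 2) (Y : Set α) : Prop :=
  Y ⊆ X ∧
  (∀ v ∈ Y ∩ A.P (1 - σ), ∃ u ∈ Y, (v, u) ∈ A.E) ∧
  (∀ v ∈ Y ∩ A.P σ, ∀ u, (v, u) ∈ A.E → u ∈ X → u ∈ Y)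

/-- A play of the (pseudo-)arena `A(X)`: an infinite `E`-path staying in `X`. -/
def IsPlayIn (A : Arena α) (X : Set α) (ρ : ℕ → α) : Prop :=
  ∀ i, ρ i ∈ X ∧ (ρ i, ρ (i + 1)) ∈ A.E

/-- The set of vertices occurring infinitely often in the play `ρ`. -/
def InfOcc (ρ : ℕ → α) : Set α := {v | {i | ρ i = v}.Infinite}

/-- A strategy for Player σ in the game played on the pseudo-arena `A(X)`:
it maps a history (the finite prefix before the current vertex) and the
current vertex of `V_σ ∩ X` to an `E`-successor inside `X`. -/
structure StrategyIn (A : Arena α) (X : Set α) (σ : Fin 2) where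
  move : List α → α → α
  legal : ∀ h v, v ∈ X ∩ A.P σ → (v, move h v) ∈ A.E ∧ move h v ∈ X

/-- A play is consistent with a strategy for Player σ if every move from a
vertex of `V_σ` follows the strategy. -/
def ConsistentIn {A : Arena α} {X : Set α} {σ : Fin 2} (s : StrategyIn A X σ)
    (ρ : ℕ → α) : Prop :=
  ∀ i, ρ i ∈ A.P σ → ρ (i + 1) = s.move (List.ofFn fun j : Fin i => ρ j) (ρ i)

/-- Player σ wins the game on `A(X)` (with payoff `payoff` describing the
plays won by Player 0) from position `v`. -/
def WinsFrom (A : Arena α) (X : Set α) (payoff : (ℕ → α) → Prop) (σ : Fin 2)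
    (v : α) : Prop :=
  ∃ s : StrategyIn A X σ, ∀ ρ, IsPlayIn A X ρ → ρ 0 = v → ConsistentIn s ρ →
    (if σ = 0 then payoff ρ else ¬ payoff ρ)

/-- `Win_σ` of the game on `A(X)`. -/
def WinSet (A : Arena α) (X : Set α) (payoff : (ℕ → α) → Prop) (σ : Fin 2) :
    Set α :=
  {v ∈ X | WinsFrom A X payoff σ v}

/-- Player σ fully wins the game on `A(X)`. -/
def FullyWins (A : Arena α) (X : Set α) (payoff : (ℕ → α) → Prop)
    (σ : Fin 2) : Prop :=
  ∀ v ∈ X, WinsFrom A X payoff σ v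

/-- The attractor `Attr_σ(T, A(X))`: the least `W ⊇ T` containing every
`u ∈ X ∩ V_σ` with some `E`-successor in `W ∩ X` and every
`u ∈ X ∩ V_{1-σ}` all of whose `E`-successors inside `X` lie in `W`. -/
def AttrIn (A : Arena α) (X : Set α) (σ : Fin 2) (T : Set α) : Set α :=
  ⋂₀ {W | T ⊆ W ∧
    (∀ u ∈ X ∩ A.P σ, (∃ w ∈ W ∩ X, (u, w) ∈ A.E) → u ∈ W) ∧
    (∀ u ∈ X ∩ A.P (1 - σ), (∀ w, (u, w) ∈ A.E → w ∈ X → w ∈ W) → u ∈ W)}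

/-- The Müller winning condition: Player 0 wins the play `ρ` iff `Inf(ρ) ∈ Ω`. -/
def MullerPayoff (Ω : Set (Set α)) : (ℕ → α) → Prop := fun ρ => InfOcc ρ ∈ Ω

/-- The McNaughton winning condition: Player 0 wins `ρ` iff `Inf(ρ) ∩ W ∈ Ω`. -/
def McNaughtonPayoff (W : Set α) (Ω : Set (Set α)) : (ℕ → α) → Prop :=
  fun ρ => InfOcc ρ ∩ W ∈ Ω


namespace S18
open Classical
variable (A : Arena α) (X : Set α)

def lvl (T : Set α) : ℕ → Set α
  | 0 => ∅
  | n + 1 => T ∪ {v | v ∈ X ∩ A.V0 ∧ ∃ u, (v, u) ∈ A.E ∧ u ∈ X ∧ u ∈ lvl T n}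
      ∪ {v | v ∈ X ∩ A.V1 ∧ ∀ u, (v, u) ∈ A.E → u ∈ X → u ∈ lvl T n}

def attr (T : Set α) : Set α := ⋃ n, lvl A X T n

variable {A X}

lemma lvl_mono {T : Set α} : Monotone (lvl A X T) := by
  have key : ∀ n, lvl A X T n ⊆ lvl A X T (n+1) := by
    intro n
    induction n with
    | zero => simp [lvl]
    | succ n ih =>
      intro v hv
      rcases hv with (h | h) | h
      · exact Or.inl (Or.inl h)
      · exact Or.inl <| Or.inr ⟨h.1, h.2.choose, h.2.choose_spec.1, h.2.choose_spec.2.1,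
          ih h.2.choose_spec.2.2⟩
      · exact Or.inr ⟨h.1, fun u hu hux => ih (h.2 u hu hux)⟩
  exact monotone_nat_of_le_succ key

lemma subset_lvl_succ {T : Set α} (n : ℕ) : T ⊆ lvl A X T (n+1) := fun v hv => Or.inl (Or.inl hv)

lemma subset_attr {T : Set α} : T ⊆ attr A X T := fun v hv =>
  Set.mem_iUnion.2 ⟨1, subset_lvl_succ 0 hv⟩

lemma mem_attr {T : Set α} {v : α} : v ∈ attr A X T ↔ ∃ n, v ∈ lvl A X T n := Set.mem_iUnion

lemma lvl_subset_X {T : Set α} (hT : T ⊆ X) (n : ℕ) : lvl A X T n ⊆ X := by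
  cases n with
  | zero => simp [lvl]
  | succ n =>
    rintro v ((h | h) | h)
    · exact hT h
    · exact h.1.1
    · exact h.1.1

lemma attr_subset_X {T : Set α} (hT : T ⊆ X) : attr A X T ⊆ X := by
  intro v hv; rcases mem_attr.1 hv with ⟨n, hn⟩; exact lvl_subset_X hT n hn

/-- a finite set all of whose members are in the attractor is inside some level -/
lemma exists_lvl_bound {T S : Set α} (hS : ∀ u ∈ S, u ∈ attr A X T) :
    ∃ N, ∀ u ∈ S, u ∈ lvl A X T N := by
  have hfin : S.Finite := Set.toFinite S
  revert hS
  refine Set.Finite.induction_on (motive := fun s _ => (∀ u ∈ s, u ∈ attr A X T) →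
    ∃ N, ∀ u ∈ s, u ∈ lvl A X T N) S hfin (fun _ => ⟨0, by simp⟩) ?_
  rintro a s ha hs ih hS
  obtain ⟨N, hN⟩ := ih (fun u hu => hS u (Or.inr hu))
  obtain ⟨M, hM⟩ := mem_attr.1 (hS a (Or.inl rfl))
  refine ⟨max N M, ?_⟩
  rintro u (rfl | hu)
  · exact lvl_mono (le_max_right N M) hM
  · exact lvl_mono (le_max_left N M) (hN u hu)

/-- the complement of the attractor is a 0-trap in X -/
lemma trap_compl_attr {T : Set α} (hX : Subarena A X) :
    TrapIn A X 0 (X \ attr A X T) := by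
  refine ⟨Set.diff_subset, ?_, ?_⟩
  · rintro v ⟨⟨hvX, hvA⟩, hv1⟩
    have hv1 : v ∈ A.V1 := by simpa [Arena.P] using hv1
    by_contra hno
    push_neg at hno
    have : ∀ u, (v, u) ∈ A.E → u ∈ X → u ∈ attr A X T := by
      intro u hu hux
      by_contra huA
      exact hno u ⟨hux, huA⟩ hu
    obtain ⟨N, hN⟩ := exists_lvl_bound (S := {u | (v, u) ∈ A.E ∧ u ∈ X})
      (fun u hu => this u hu.1 hu.2)
    exact hvA (mem_attr.2 ⟨N + 1, Or.inr ⟨⟨hvX, hv1⟩, fun u hu hux => hN u ⟨hu, hux⟩⟩⟩)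
  · rintro v ⟨⟨hvX, hvA⟩, hv0⟩ u hu hux
    have hv0 : v ∈ A.V0 := by simpa [Arena.P] using hv0
    refine ⟨hux, fun huA => ?_⟩
    rcases mem_attr.1 huA with ⟨n, hn⟩
    exact hvA (mem_attr.2 ⟨n + 1, Or.inl (Or.inr ⟨⟨hvX, hv0⟩, u, hu, hux, hn⟩)⟩)

lemma subarena_compl_attr {T : Set α} (hX : Subarena A X) :
    Subarena A (X \ attr A X T) := by
  have ht := trap_compl_attr (T := T) hX
  refine ⟨Set.diff_subset.trans hX.1, ?_⟩
  intro v hv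
  rcases hX.1 hv.1 with hv0 | hv1
  · obtain ⟨u, hux, hu⟩ := hX.2 v hv.1
    exact ⟨u, ht.2.2 v ⟨hv, by simpa [Arena.P] using hv0⟩ u hu hux, hu⟩
  · obtain ⟨u, hu, he⟩ := ht.2.1 v ⟨hv, by simpa [Arena.P] using hv1⟩
    exact ⟨u, hu, he⟩

variable (A X)

/-- rank within the attractor -/
noncomputable def rnk (T : Set α) (v : α) : ℕ := sInf {n | v ∈ lvl A X T n}

variable {A X}

lemma rnk_le {T : Set α} {v : α} {n : ℕ} (h : v ∈ lvl A X T n) : rnk A X T v ≤ n :=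
  Nat.sInf_le h

lemma mem_lvl_rnk {T : Set α} {v : α} (h : v ∈ attr A X T) : v ∈ lvl A X T (rnk A X T v) := by
  rcases mem_attr.1 h with ⟨n, hn⟩
  exact Nat.sInf_mem (⟨n, hn⟩ : {m | v ∈ lvl A X T m}.Nonempty)

lemma rnk_pos {T : Set α} {v : α} (h : v ∈ attr A X T) : 0 < rnk A X T v := by
  rcases Nat.eq_zero_or_pos (rnk A X T v) with h0 | h1
  · have := mem_lvl_rnk h; rw [h0] at this; simp [lvl] at this
  · exact h1

lemma attr_step {T : Set α} {v : α} (hv : v ∈ attr A X T) (hvT : v ∉ T) :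
    (v ∈ A.V0 → ∃ u, (v, u) ∈ A.E ∧ u ∈ X ∧ u ∈ attr A X T ∧ rnk A X T u < rnk A X T v) ∧
    (v ∈ A.V1 → ∀ u, (v, u) ∈ A.E → u ∈ X → u ∈ attr A X T ∧ rnk A X T u < rnk A X T v) := by
  have hm := mem_lvl_rnk hv
  obtain ⟨m, hmeq⟩ : ∃ m, rnk A X T v = m + 1 :=
    ⟨rnk A X T v - 1, by have := rnk_pos hv; omega⟩
  rw [hmeq] at hm
  constructor
  · intro hv0
    rcases hm with (h | h) | h
    · exact absurd h hvT
    · obtain ⟨_, u, hu, hux, hul⟩ := h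
      exact ⟨u, hu, hux, mem_attr.2 ⟨m, hul⟩, by rw [hmeq]; exact Nat.lt_succ_of_le (rnk_le hul)⟩
    · exact absurd hv0 (Set.disjoint_left.1 A.disj.symm h.1.2)
  · intro hv1 u hu hux
    rcases hm with (h | h) | h
    · exact absurd h hvT
    · exact absurd hv1 (Set.disjoint_left.1 A.disj h.1.2)
    · have hul := h.2 u hu hux
      exact ⟨mem_attr.2 ⟨m, hul⟩, by rw [hmeq]; exact Nat.lt_succ_of_le (rnk_le hul)⟩

end S18

namespace S18
open Classical
variable (A : Arena α) (X : Set α)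

/-- A default legal move inside a subarena. -/
noncomputable def dflt (hX : Subarena A X) (v : α) : α :=
  if hv : v ∈ X then (hX.2 v hv).choose else v

variable {A X}

lemma dflt_spec (hX : Subarena A X) {v : α} (hv : v ∈ X) :
    dflt A X hX v ∈ X ∧ (v, dflt A X hX v) ∈ A.E := by
  rw [dflt, dif_pos hv]; exact (hX.2 v hv).choose_spec

variable (A X)

/-- A junk strategy on a subarena: always plays the default move. -/
noncomputable def junkStrat (hX : Subarena A X) (σ : Fin 2) : StrategyIn A X σ :=
  ⟨fun _ v => dflt A X hX v, fun _ v hv =>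
    ⟨(dflt_spec hX hv.1).2, (dflt_spec hX hv.1).1⟩⟩

def Yc (c : α) : Set α := X \ attr A X {c}

variable {A X}

lemma Yc_ssubset {c : α} (hc : c ∈ X) : Yc A X c ⊂ X :=
  (Set.ssubset_iff_of_subset Set.diff_subset).2
    ⟨c, hc, fun h => h.2 (subset_attr rfl)⟩

variable (A X)

/-- Chosen winning strategy for player 0 on the complement of the attractor of `{c}`,
starting at `u`. -/
noncomputable def ystrat (hX : Subarena A X) (pay : (ℕ → α) → Prop)
    (hyp : ∀ Y, Y ⊂ X → Subarena A Y → TrapIn A X 0 Y → FullyWins A Y pay 0)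
    (c u : α) : StrategyIn A (Yc A X c) 0 :=
  if h : c ∈ X ∧ u ∈ Yc A X c then
    (hyp (Yc A X c) (Yc_ssubset h.1) (subarena_compl_attr hX) (trap_compl_attr hX) u h.2).choose
  else junkStrat A (Yc A X c) (subarena_compl_attr hX) 0

variable {A X}

lemma ystrat_spec (hX : Subarena A X) (pay : (ℕ → α) → Prop)
    (hyp : ∀ Y, Y ⊂ X → Subarena A Y → TrapIn A X 0 Y → FullyWins A Y pay 0)
    {c u : α} (hc : c ∈ X) (hu : u ∈ Yc A X c) :
    ∀ ρ, IsPlayIn A (Yc A X c) ρ → ρ 0 = u →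
      ConsistentIn (ystrat A X hX pay hyp c u) ρ → pay ρ := by
  intro ρ h1 h2 h3
  rw [ystrat, dif_pos ⟨hc, hu⟩] at h3
  have := (hyp (Yc A X c) (Yc_ssubset hc) (subarena_compl_attr hX) (trap_compl_attr hX)
    u hu).choose_spec ρ h1 h2 h3
  simpa using this

variable (A X)

/-- Attractor strategy: move to a successor of smaller rank. -/
noncomputable def astrat (hX : Subarena A X) (c v : α) : α :=
  if h : ∃ u, (v, u) ∈ A.E ∧ u ∈ X ∧ u ∈ attr A X {c} ∧ rnk A X {c} u < rnk A X {c} v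
  then h.choose else dflt A X hX v

variable {A X}

lemma astrat_mem (hX : Subarena A X) {c v : α} (hv : v ∈ X) :
    (v, astrat A X hX c v) ∈ A.E ∧ astrat A X hX c v ∈ X := by
  rw [astrat]
  split_ifs with h
  · exact ⟨h.choose_spec.1, h.choose_spec.2.1⟩
  · exact ⟨(dflt_spec hX hv).2, (dflt_spec hX hv).1⟩

lemma astrat_desc (hX : Subarena A X) {c v : α} (hv : v ∈ attr A X {c})
    (hv0 : v ∈ A.V0) (hvc : v ≠ c) :
    (v, astrat A X hX c v) ∈ A.E ∧ astrat A X hX c v ∈ X ∧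
      astrat A X hX c v ∈ attr A X {c} ∧
      rnk A X {c} (astrat A X hX c v) < rnk A X {c} v := by
  have h := (attr_step hv (by simpa using hvc)).1 hv0
  rw [astrat, dif_pos h]
  exact h.choose_spec

open Classical in
/-- The stage counter: scan the list, incrementing whenever the current target is seen. -/
noncomputable def stg (tf : ℕ → α) (l : List α) : ℕ :=
  l.foldl (fun s x => if x = tf s then s + 1 else s) 0

open Classical in
lemma stg_concat (tf : ℕ → α) (l : List α) (x : α) :
    stg tf (l ++ [x]) = if x = tf (stg tf l) then stg tf l + 1 else stg tf l := by
  simp [stg, List.foldl_append]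
  congr

variable (A X)

/-- The entry time into the current trap: start of the maximal suffix of `l`
whose vertices avoid the attractor and whose stage equals the final stage. -/
noncomputable def etime (tf : ℕ → α) (d : α) (l : List α) : ℕ :=
  sInf {t | ∀ p, t ≤ p → p < l.length →
      l.getD p d ∈ Yc A X (tf (stg tf l)) ∧ stg tf (l.take (p + 1)) = stg tf l}

variable {A X}

lemma etime_spec (tf : ℕ → α) (d : α) (l : List α) :
    ∀ p, etime A X tf d l ≤ p → p < l.length →
      l.getD p d ∈ Yc A X (tf (stg tf l)) ∧ stg tf (l.take (p + 1)) = stg tf l := by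
  have hne : {t | ∀ p, t ≤ p → p < l.length →
      l.getD p d ∈ Yc A X (tf (stg tf l)) ∧ stg tf (l.take (p + 1)) = stg tf l}.Nonempty :=
    ⟨l.length, fun p h1 h2 => absurd (h1.trans_lt h2) (lt_irrefl _)⟩
  exact Nat.sInf_mem hne

lemma etime_min (tf : ℕ → α) (d : α) (l : List α) {t : ℕ} (ht : t < etime A X tf d l) :
    ¬ ∀ p, t ≤ p → p < l.length →
      l.getD p d ∈ Yc A X (tf (stg tf l)) ∧ stg tf (l.take (p + 1)) = stg tf l := by
  exact Nat.notMem_of_lt_sInf ht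

lemma etime_le (tf : ℕ → α) (d : α) (l : List α) {t : ℕ}
    (ht : ∀ p, t ≤ p → p < l.length →
      l.getD p d ∈ Yc A X (tf (stg tf l)) ∧ stg tf (l.take (p + 1)) = stg tf l) :
    etime A X tf d l ≤ t := by
  exact Nat.sInf_le ht

variable (A X)

/-- The composite strategy for player 0. -/
noncomputable def cmove (hX : Subarena A X) (pay : (ℕ → α) → Prop)
    (hyp : ∀ Y, Y ⊂ X → Subarena A Y → TrapIn A X 0 Y → FullyWins A Y pay 0)
    (tf : ℕ → α) (d : α) : List α → α → α := fun h v =>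
  if v ∈ Yc A X (tf (stg tf (h ++ [v]))) ∧ v ∈ A.V0 then
    (ystrat A X hX pay hyp (tf (stg tf (h ++ [v])))
        ((h ++ [v]).getD (etime A X tf d (h ++ [v])) d)).move
      (h.drop (etime A X tf d (h ++ [v]))) v
  else if v ∈ A.V0 ∧ v ≠ tf (stg tf (h ++ [v])) then
    astrat A X hX (tf (stg tf (h ++ [v]))) v
  else dflt A X hX v

noncomputable def cstrat (hX : Subarena A X) (pay : (ℕ → α) → Prop)
    (hyp : ∀ Y, Y ⊂ X → Subarena A Y → TrapIn A X 0 Y → FullyWins A Y pay 0)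
    (tf : ℕ → α) (d : α) : StrategyIn A X 0 := by
  refine ⟨cmove A X hX pay hyp tf d, ?_⟩
  intro h v hv
  have hvX : v ∈ X := hv.1
  have hv0 : v ∈ A.V0 := by simpa [Arena.P] using hv.2
  unfold cmove
  split_ifs with h1 h2
  · have := (ystrat A X hX pay hyp (tf (stg tf (h ++ [v])))
        ((h ++ [v]).getD (etime A X tf d (h ++ [v])) d)).legal
      (h.drop (etime A X tf d (h ++ [v]))) v ⟨h1.1, by simpa [Arena.P] using hv0⟩
    exact ⟨this.1, this.2.1⟩
  · exact astrat_mem hX hvX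
  · exact ⟨(dflt_spec hX hvX).2, (dflt_spec hX hvX).1⟩

end S18

namespace S18
open Classical

-- ===== play prefixes =====

def pl (ρ : ℕ → α) (n : ℕ) : List α := List.ofFn fun j : Fin n => ρ j

lemma pl_succ (ρ : ℕ → α) (n : ℕ) : pl ρ (n + 1) = pl ρ n ++ [ρ n] := by
  rw [pl, List.ofFn_succ']; simp [pl, List.concat_eq_append]

lemma pl_length (ρ : ℕ → α) (n : ℕ) : (pl ρ n).length = n := by simp [pl]

lemma pl_getD (ρ : ℕ → α) {p n : ℕ} (h : p < n) (d : α) : (pl ρ n).getD p d = ρ p := by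
  rw [pl, List.getD_eq_getElem] <;> simp [h]

lemma pl_take (ρ : ℕ → α) {m n : ℕ} (h : m ≤ n) : (pl ρ n).take m = pl ρ m := by
  apply List.ext_getElem <;> simp [pl, h, *]

-- ===== stage along a play =====

noncomputable def st (tf : ℕ → α) (ρ : ℕ → α) (n : ℕ) : ℕ := stg tf (pl ρ n)

lemma st_zero (tf : ℕ → α) (ρ : ℕ → α) : st tf ρ 0 = 0 := by simp [st, pl, stg]

open Classical in
lemma st_succ (tf : ℕ → α) (ρ : ℕ → α) (n : ℕ) :
    st tf ρ (n + 1) = if ρ n = tf (st tf ρ n) then st tf ρ n + 1 else st tf ρ n := by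
  unfold st; rw [pl_succ, stg_concat]

lemma st_le_succ (tf : ℕ → α) (ρ : ℕ → α) (n : ℕ) : st tf ρ (n + 1) ≤ st tf ρ n + 1 := by
  rw [st_succ]; split <;> omega

lemma st_ge_succ (tf : ℕ → α) (ρ : ℕ → α) (n : ℕ) : st tf ρ n ≤ st tf ρ (n + 1) := by
  rw [st_succ]; split <;> omega

lemma st_mono (tf : ℕ → α) (ρ : ℕ → α) : Monotone (st tf ρ) :=
  monotone_nat_of_le_succ (st_ge_succ tf ρ)

lemma st_le_self (tf : ℕ → α) (ρ : ℕ → α) (n : ℕ) : st tf ρ n ≤ n := by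
  induction n with
  | zero => simp [st_zero]
  | succ n ih => have := st_le_succ tf ρ n; omega

lemma st_hit (tf : ℕ → α) (ρ : ℕ → α) (hub : ∀ B, ∃ n, B < st tf ρ n) (j : ℕ) :
    ∃ n, j ≤ n ∧ ρ n = tf j := by
  obtain ⟨m0, hm0⟩ := hub j
  have hex : ∃ m, j + 1 ≤ st tf ρ m := ⟨m0, hm0⟩
  have hm : j + 1 ≤ st tf ρ (Nat.find hex) := Nat.find_spec hex
  have hm1 : Nat.find hex ≠ 0 := by
    intro h; rw [h, st_zero] at hm; omega
  obtain ⟨n, hn⟩ : ∃ n, Nat.find hex = n + 1 := ⟨Nat.find hex - 1, by omega⟩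
  have hnlt : ¬ j + 1 ≤ st tf ρ n := Nat.find_min hex (by omega)
  rw [hn] at hm
  have hle := st_le_succ tf ρ n
  have hif := st_succ tf ρ n
  split_ifs at hif with he
  · have hstn : st tf ρ n = j := by omega
    refine ⟨n, ?_, by rw [← hstn]; exact he⟩
    have := st_le_self tf ρ n; omega
  · omega

lemma infinite_of_unbounded {S : Set ℕ} (h : ∀ m, ∃ n, m < n ∧ n ∈ S) : S.Infinite := by
  by_contra hfin
  rw [Set.not_infinite] at hfin
  obtain ⟨b, hb⟩ := hfin.bddAbove
  obtain ⟨n, hmn, hnS⟩ := h b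
  exact absurd (hb hnS) (by omega)

lemma infOcc_shift (ρ : ℕ → α) (t : ℕ) : InfOcc (fun j => ρ (t + j)) = InfOcc ρ := by
  ext v
  simp only [InfOcc, Set.mem_setOf_eq]
  constructor
  · intro h
    have h2 : Set.InjOn (fun j => t + j) {j | ρ (t + j) = v} := fun a _ b _ hab => by
      simp only at hab; omega
    refine Set.Infinite.mono ?_ (h.image h2)
    rintro _ ⟨j, hj, rfl⟩
    exact hj
  · intro h
    have h1 : ({i | ρ i = v} \ Set.Iio t).Infinite := h.diff (Set.finite_Iio t)
    have h2 : Set.InjOn (fun i => i - t) ({i | ρ i = v} \ Set.Iio t) := by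
      intro a ha b hb hab
      simp only [Set.mem_diff, Set.mem_Iio, not_lt] at ha hb
      simp only at hab
      omega
    refine Set.Infinite.mono ?_ (h1.image h2)
    rintro _ ⟨i, ⟨hi, hit⟩, rfl⟩
    simp only [Set.mem_Iio, not_lt] at hit
    show ρ (t + (i - t)) = v
    rw [show t + (i - t) = i by omega]
    exact hi

-- ===== forward direction =====

lemma forward {A : Arena α} {X : Set α} (pay : (ℕ → α) → Prop)
    (hXw : FullyWins A X pay 0) {Y : Set α} (hYX : Y ⊆ X)
    (htrap : TrapIn A X 0 Y) : FullyWins A Y pay 0 := by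
  intro v hv
  obtain ⟨s, hs⟩ := hXw v (hYX hv)
  refine ⟨⟨s.move, ?_⟩, ?_⟩
  · intro h u hu
    have hleg := s.legal h u ⟨hYX hu.1, hu.2⟩
    exact ⟨hleg.1, htrap.2.2 u hu (s.move h u) hleg.1 hleg.2⟩
  · intro ρ hρ h0 hcons
    have hρX : IsPlayIn A X ρ := fun i => ⟨hYX (hρ i).1, (hρ i).2⟩
    exact hs ρ hρX h0 hcons

-- ===== backward direction =====

lemma backward (A : Arena α) (W : Set α) (Ω : Set (Set α)) (X : Set α)
    (hX : Subarena A X) (hmem : X ∩ W ∈ Ω)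
    (hyp : ∀ Y, Y ⊂ X → Subarena A Y → TrapIn A X 0 Y →
      FullyWins A Y (McNaughtonPayoff W Ω) 0) :
    FullyWins A X (McNaughtonPayoff W Ω) 0 := by
  have hInfX : ∀ ρ : ℕ → α, IsPlayIn A X ρ → InfOcc ρ ∩ W ⊆ X ∩ W := by
    intro ρ hρ u hu
    obtain ⟨i, hi⟩ := hu.1.nonempty
    exact ⟨hi ▸ (hρ i).1, hu.2⟩
  by_cases hSW : X ∩ W = ∅
  · intro v hv
    refine ⟨junkStrat A X hX 0, ?_⟩
    intro ρ hρ h0 hcons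
    show InfOcc ρ ∩ W ∈ Ω
    have hsub : InfOcc ρ ∩ W = ∅ :=
      Set.eq_empty_of_subset_empty (hSW ▸ hInfX ρ hρ)
    rw [hsub, ← hSW]
    exact hmem
  · have hfin : (X ∩ W).Finite := Set.toFinite _
    have hkpos : 0 < hfin.toFinset.toList.length := by
      rw [List.length_pos_iff]
      intro h0
      exact hSW (Set.Finite.toFinset_eq_empty.1 (Finset.toList_eq_nil.1 h0))
    set L := hfin.toFinset.toList with hLdef
    have hLmem : ∀ c ∈ L, c ∈ X ∩ W := by
      intro c hc
      rw [hLdef, Finset.mem_toList, Set.Finite.mem_toFinset] at hc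
      exact hc
    have hmemL : ∀ c ∈ X ∩ W, c ∈ L := by
      intro c hc
      rw [hLdef, Finset.mem_toList, Set.Finite.mem_toFinset]
      exact hc
    set tf : ℕ → α := fun s => L.get ⟨s % L.length, Nat.mod_lt _ hkpos⟩ with htf
    have htfmem : ∀ s, tf s ∈ X ∩ W := fun s => hLmem _ (L.get_mem _)
    set d := tf 0 with hd
    intro v0 hv0
    refine ⟨cstrat A X hX (McNaughtonPayoff W Ω) hyp tf d, ?_⟩
    intro ρ hρ h0 hcons
    show InfOcc ρ ∩ W ∈ Ω
    have hconsC : ∀ n, ρ n ∈ A.V0 →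
        ρ (n + 1) = cmove A X hX (McNaughtonPayoff W Ω) hyp tf d (pl ρ n) (ρ n) := by
      intro n hn
      exact hcons n (by simpa [Arena.P] using hn)
    by_cases hbd : ∃ B, ∀ n, st tf ρ n ≤ B
    · -- bounded stage: eventually trapped in some Y_c
      obtain ⟨B, hB⟩ := hbd
      have hne : (Set.range (st tf ρ)).Nonempty := ⟨_, 0, rfl⟩
      have hbdd : BddAbove (Set.range (st tf ρ)) := ⟨B, by rintro x ⟨n, rfl⟩; exact hB n⟩
      obtain ⟨N1, hN1⟩ := Nat.sSup_mem hne hbdd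
      set s := sSup (Set.range (st tf ρ)) with hs
      have hle : ∀ n, st tf ρ n ≤ s := fun n => le_csSup hbdd ⟨n, rfl⟩
      have hexN : ∃ n, st tf ρ n = s := ⟨N1, hN1⟩
      set N0 := Nat.find hexN with hN0def
      have hN0 : st tf ρ N0 = s := Nat.find_spec hexN
      have hconst : ∀ n, N0 ≤ n → st tf ρ n = s :=
        fun n hn => le_antisymm (hle n) (hN0 ▸ st_mono tf ρ hn)
      have hstage_ge : ∀ m, st tf ρ m = s → N0 ≤ m := fun m hm => Nat.find_min' hexN hm
      have hcXW : tf s ∈ X ∩ W := htfmem s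
      have hnc : ∀ n, N0 ≤ n → ρ n ≠ tf s := by
        intro n hn he
        have h1 := st_succ tf ρ n
        rw [hconst n hn, if_pos he] at h1
        have h2 := hconst (n + 1) (by omega)
        omega
      have hkey : ∀ n, N0 ≤ n → ρ n ∈ attr A X {tf s} →
          ρ (n + 1) ∈ attr A X {tf s} ∧
            rnk A X {tf s} (ρ (n + 1)) < rnk A X {tf s} (ρ n) := by
        intro n hn hA
        have hnT : ρ n ∉ ({tf s} : Set α) := by simpa using hnc n hn
        rcases hX.1 (hρ n).1 with hv0' | hv1'
        · have hmove := hconsC n hv0'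
          simp only [cmove] at hmove
          rw [← pl_succ] at hmove
          have hstg : stg tf (pl ρ (n + 1)) = s := hconst (n + 1) (by omega)
          rw [hstg] at hmove
          rw [if_neg (fun hcontra => hcontra.1.2 hA),
            if_pos ⟨hv0', hnc n hn⟩] at hmove
          rw [hmove]
          have hdesc := astrat_desc hX hA hv0' (hnc n hn)
          exact ⟨hdesc.2.2.1, hdesc.2.2.2⟩
        · exact (attr_step hA hnT).2 hv1' (ρ (n + 1)) (hρ n).2 (hρ (n + 1)).1
      have hnoattr : ∀ n, N0 ≤ n → ρ n ∉ attr A X {tf s} := by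
        intro n hn hA
        have hdesc : ∀ j, ρ (n + j) ∈ attr A X {tf s} ∧
            rnk A X {tf s} (ρ (n + j)) + j ≤ rnk A X {tf s} (ρ n) := by
          intro j
          induction j with
          | zero => simpa using hA
          | succ j ih =>
            have h2 := hkey (n + j) (by omega) ih.1
            have h3 : n + (j + 1) = (n + j) + 1 := by omega
            rw [h3]
            refine ⟨h2.1, ?_⟩
            have := ih.2
            have := h2.2
            omega
        have := (hdesc (rnk A X {tf s} (ρ n) + 1)).2
        omega
      have ht0ok : ∀ p, N0 ≤ p → ρ p ∈ Yc A X (tf s) ∧ st tf ρ (p + 1) = s :=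
        fun p hp => ⟨⟨(hρ p).1, hnoattr p hp⟩, hconst (p + 1) (by omega)⟩
      have ht0ne : {t : ℕ | ∀ p, t ≤ p → ρ p ∈ Yc A X (tf s) ∧ st tf ρ (p + 1) = s}.Nonempty :=
        ⟨N0, ht0ok⟩
      set t0 := sInf {t : ℕ | ∀ p, t ≤ p → ρ p ∈ Yc A X (tf s) ∧ st tf ρ (p + 1) = s} with ht0def
      have ht0spec : ∀ p, t0 ≤ p → ρ p ∈ Yc A X (tf s) ∧ st tf ρ (p + 1) = s :=
        Nat.sInf_mem ht0ne
      have ht0N : N0 ≤ t0 + 1 := hstage_ge (t0 + 1) (ht0spec t0 le_rfl).2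
      have hetime : ∀ n, t0 ≤ n → etime A X tf d (pl ρ (n + 1)) = t0 := by
        intro n hn
        have hstg : stg tf (pl ρ (n + 1)) = s := hconst (n + 1) (by omega)
        apply le_antisymm
        · apply etime_le
          intro p hp hplen
          rw [pl_length] at hplen
          rw [pl_getD ρ hplen, pl_take ρ (by omega : p + 1 ≤ n + 1), hstg]
          exact ht0spec p hp
        · by_contra hlt
          push_neg at hlt
          have hfail := Nat.notMem_of_lt_sInf (ht0def ▸ hlt)
          simp only [Set.mem_setOf_eq] at hfail
          have hfail' : ∃ p, etime A X tf d (pl ρ (n + 1)) ≤ p ∧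
              ¬ (ρ p ∈ Yc A X (tf s) ∧ st tf ρ (p + 1) = s) := by
            by_contra hno
            push_neg at hno
            exact hfail (fun p hp => hno p hp)
          obtain ⟨p, hpe, hpnot'⟩ := hfail'
          have hpN0 : p < N0 := by
            by_contra hge
            exact hpnot' (ht0ok p (by omega))
          have hplen : p < n + 1 := by omega
          have := etime_spec tf d (pl ρ (n + 1)) p hpe (by rw [pl_length]; omega)
          rw [pl_getD ρ hplen, pl_take ρ (by omega : p + 1 ≤ n + 1), hstg] at this
          exact hpnot' this
      have hplay' : IsPlayIn A (Yc A X (tf s)) (fun j => ρ (t0 + j)) :=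
        fun j => ⟨(ht0spec (t0 + j) (by omega)).1, (hρ (t0 + j)).2⟩
      have hcons' : ConsistentIn
          (ystrat A X hX (McNaughtonPayoff W Ω) hyp (tf s) (ρ t0)) (fun j => ρ (t0 + j)) := by
        intro j hj
        have hj0 : ρ (t0 + j) ∈ A.V0 := by simpa [Arena.P] using hj
        have hmove := hconsC (t0 + j) hj0
        simp only [cmove] at hmove
        rw [← pl_succ] at hmove
        have hstg : stg tf (pl ρ (t0 + j + 1)) = s := hconst _ (by omega)
        rw [hstg] at hmove
        rw [if_pos ⟨(ht0spec (t0 + j) (by omega)).1, hj0⟩] at hmove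
        have het : etime A X tf d (pl ρ (t0 + j + 1)) = t0 := hetime (t0 + j) (by omega)
        rw [het] at hmove
        rw [pl_getD ρ (by omega : t0 < t0 + j + 1)] at hmove
        have hdrop : (pl ρ (t0 + j)).drop t0 = List.ofFn (fun q : Fin j => ρ (t0 + q)) := by
          apply List.ext_getElem
          · simp [pl]
          · intro p h1 h2
            simp [pl, Nat.add_comm]
        rw [hdrop] at hmove
        exact hmove
      have hpay : InfOcc (fun j => ρ (t0 + j)) ∩ W ∈ Ω :=
        ystrat_spec hX (McNaughtonPayoff W Ω) hyp hcXW.1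
          (ht0spec t0 le_rfl).1 (fun j => ρ (t0 + j)) hplay' rfl hcons'
      rwa [infOcc_shift ρ t0] at hpay
    · -- unbounded stage: every target visited infinitely often
      push_neg at hbd
      have hsub : X ∩ W ⊆ InfOcc ρ ∩ W := by
        rintro c ⟨hcX, hcW⟩
        refine ⟨?_, hcW⟩
        obtain ⟨i, hi⟩ := List.mem_iff_get.1 (hmemL c ⟨hcX, hcW⟩)
        show {n | ρ n = c}.Infinite
        apply infinite_of_unbounded
        intro m
        set j := L.length * (m + 1) + i.1 with hj
        obtain ⟨n, hjn, hn⟩ := st_hit tf ρ hbd j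
        refine ⟨n, ?_, ?_⟩
        · have h5 : m + 1 ≤ L.length * (m + 1) := Nat.le_mul_of_pos_left _ hkpos
          omega
        · show ρ n = c
          rw [hn]
          simp only [htf]
          have hmod : j % L.length = i.1 := by
            rw [hj, Nat.mul_add_mod, Nat.mod_eq_of_lt i.isLt]
          rw [← hi]
          exact congrArg L.get (Fin.ext hmod)
      have heq : InfOcc ρ ∩ W = X ∩ W := Set.Subset.antisymm (hInfX ρ hρ) hsub
      rw [heq]
      exact hmem

end S18


/-- for a McNaughton game `G = (A, W, Ω)` and a subarena `A(X)`
with `X ∩ W ∈ Ω`, Player 0 fully wins `G(X)` iff Player 0 fully wins `G(Y)`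
for every proper subarena `A(Y)` that is a 0-trap in `G(X)`. -/
theorem stmt18 (A : Arena α) (W : Set α) (Ω : Set (Set α))
    (hW : W ⊆ A.V) (hΩ : ∀ S ∈ Ω, S ⊆ W)
    (X : Set α) (hX : Subarena A X) (hmem : X ∩ W ∈ Ω) :
    FullyWins A X (McNaughtonPayoff W Ω) 0 ↔
      ∀ Y, Y ⊂ X → Subarena A Y → TrapIn A X 0 Y →
        FullyWins A Y (McNaughtonPayoff W Ω) 0 := by
  constructor
  · intro hfull Y hYX _ htrap
    exact S18.forward _ hfull hYX.subset htrap
  · intro h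
    exact S18.backward A W Ω X hX hmem h
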